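/- Let ρ = exp(−H₀) and ρ_X = exp(−(H₀+X)) be finite faithful weights on a separable Hilbert space H, and suppose ρ_X is p-nearby ρ with constant C > 1 and p ∈ [0,1), i.e. C⁻¹ρ^{1+p} ≤ ρ_X ≤ Cρ^{1−p}. Then the form domain of X contains the form domain Q(H₀) = Dom(H₀^{1/2}), and as quadratic forms on Q(H₀) one has −log C − p·H₀ ≤ −X ≤ log C + p·H₀; in particular X is an H₀-bounded quadratic form with relative form bound at most p. -/

import Mathlib

open scoped InnerProductSpace ENNReal NNReal
open MeasureTheory Metric Filter

noncomputable section

variable {H : Type*} [NormedAddCommGroup H] [InnerProductSpace ℂ H] [CompleteSpace H]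
  [TopologicalSpace.SeparableSpace H]

/-- The real power `ρ ^ t` (for `t ≥ 0`) of a positive operator `ρ`, via the continuous
functional calculus. -/
def opow (ρ : H →L[ℂ] H) (t : ℝ) : H →L[ℂ] H := cfc (fun x : ℝ => x ^ t) ρ

/-- The (real) trace of an operator, computed along the Hilbert basis `b`. -/
def trElem {ι : Type*} (b : HilbertBasis ι ℂ H) (T : H →L[ℂ] H) : ℝ :=
  ∑' i, (⟪b i, T (b i)⟫_ℂ).re

/-- `ρ` is a finite faithful weight: a positive, injective, trace-class operator
(trace-class being witnessed by summability of the diagonal in the Hilbert basis `b`). -/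
def IsFiniteWeight {ι : Type*} (b : HilbertBasis ι ℂ H) (ρ : H →L[ℂ] H) : Prop :=
  0 ≤ ρ ∧ Function.Injective (⇑ρ) ∧ Summable (fun i => (⟪b i, ρ (b i)⟫_ℂ).re)

/-- `σ` is nearby `ρ`: there is `C > 1` with `C⁻¹ ρ ≤ σ ≤ C ρ` in the Loewner order. -/
def IsNearby (σ ρ : H →L[ℂ] H) : Prop :=
  ∃ C : ℝ, 1 < C ∧ C⁻¹ • ρ ≤ σ ∧ σ ≤ C • ρ

/-- `F` is the Araki family `t ↦ ρ^t X ρ^{-t}` of `X` relative to `ρ`: a bounded holomorphic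
`B(H)`-valued extension to the disc `|t| < 1/2` of `t ↦ ρ^t X ρ^{-t}`, the latter being
expressed by `F t * ρ^t = ρ^t * X` and `ρ^t * F (-t) = X * ρ^t` for real `0 ≤ t < 1/2`. -/
def IsArakiFamily (ρ X : H →L[ℂ] H) (F : ℂ → H →L[ℂ] H) : Prop :=
  DifferentiableOn ℂ F (ball (0:ℂ) (1/2)) ∧
  (∃ M : ℝ, ∀ t ∈ ball (0:ℂ) (1/2), ‖F t‖ ≤ M) ∧
  (∀ t : ℝ, 0 ≤ t → t < 1/2 → F (t:ℂ) * opow ρ t = opow ρ t * X) ∧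
  (∀ t : ℝ, 0 ≤ t → t < 1/2 → opow ρ t * F (-(t:ℂ)) = X * opow ρ t)

/-- `X` satisfies the Araki condition for `ρ`. -/
def SatisfiesAraki (ρ X : H →L[ℂ] H) : Prop := ∃ F, IsArakiFamily ρ X F

/-- The Araki norm `‖X‖_A = sup_{|t| < 1/2} ‖ρ^t X ρ^{-t}‖`. -/
def arakiNorm (ρ X : H →L[ℂ] H) : ℝ :=
  sInf {M : ℝ | 0 ≤ M ∧ ∃ F, IsArakiFamily ρ X F ∧ ∀ t ∈ ball (0:ℂ) (1/2), ‖F t‖ ≤ M}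

/-- `σ = exp (-(H₀ + X))` where `ρ = exp (-H₀)`: the semigroup `t ↦ σ^t` is the mild
(Duhamel) solution of the semigroup `t ↦ ρ^t` perturbed by the bounded operator `-X`,
i.e. `σ^t = ρ^t - ∫_0^t ρ^{t-s} X σ^s ds` for all `t ≥ 0`. -/
def IsExpPerturbed (ρ σ X : H →L[ℂ] H) : Prop :=
  ∀ t : ℝ, 0 ≤ t →
    opow σ t = opow ρ t - ∫ s in (0:ℝ)..t, opow ρ (t - s) * X * opow σ s

/-- The truncation `x ↦ -log (x + e^{-n})` of `-log`; it increases pointwise to `-log x`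
as `n → ∞` and is operator anti-monotone. -/
def negLogTrunc (n : ℕ) (x : ℝ) : ℝ := - Real.log (x + Real.exp (-(n:ℝ)))

/-- The regularised quadratic form `⟪ξ, (-log (ρ + e^{-n})) ξ⟫` of `H₀ = -log ρ`. -/
def negLogFormSeq (ρ : H →L[ℂ] H) (ξ : H) (n : ℕ) : ℝ :=
  (⟪ξ, (cfc (negLogTrunc n) ρ) ξ⟫_ℂ).re

/-- `ξ` lies in the form domain `Q(H₀) = Dom (H₀^{1/2})` of `H₀ = -log ρ`. -/
def InFormDomain (ρ : H →L[ℂ] H) (ξ : H) : Prop :=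
  BddAbove (Set.range (negLogFormSeq ρ ξ))

/-- The value `⟪ξ, H₀ ξ⟫` of the quadratic form of `H₀ = -log ρ` (a monotone limit). -/
def negLogForm (ρ : H →L[ℂ] H) (ξ : H) : ℝ := ⨆ n, negLogFormSeq ρ ξ n

/-- The regularised quadratic form `⟪ξ, (σ + e^{-n})⁻¹ ξ⟫` of `σ⁻¹`. -/
def invFormSeq (σ : H →L[ℂ] H) (ξ : H) (n : ℕ) : ℝ :=
  (⟪ξ, (cfc (fun x : ℝ => (x + Real.exp (-(n:ℝ)))⁻¹) σ) ξ⟫_ℂ).re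

/-- The quadratic form `⟪ξ, σ⁻¹ ξ⟫ ∈ [0, ∞]` of the (possibly unbounded) inverse `σ⁻¹`
of the injective positive operator `σ`, as a monotone limit of regularisations. -/
def invForm (σ : H →L[ℂ] H) (ξ : H) : ℝ≥0∞ :=
  ⨆ n : ℕ, ENNReal.ofReal (invFormSeq σ ξ n)

/-- `S` is the relative entropy `S(ρ|σ) = Tr (ρ (log ρ - log σ))`, obtained as the limit of
the regularised quantities `Tr (ρ (log (ρ + e^{-n}) - log (σ + e^{-n})))`. -/
def IsRelativeEntropy {ι : Type*} (b : HilbertBasis ι ℂ H) (ρ σ : H →L[ℂ] H) (S : ℝ) : Prop :=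
  Tendsto (fun n : ℕ => trElem b (ρ * (cfc (negLogTrunc n) σ - cfc (negLogTrunc n) ρ)))
    atTop (nhds S)

/-- The `n`-th term of the Matsubara (Dyson/expansional) series: the integral over the
ordered simplex `0 ≤ s₁ ≤ ⋯ ≤ sₙ ≤ 1` (of volume `1/n!`) of the product
`F(s₁ - 1/2) ⋯ F(sₙ - 1/2)`, where `F t = ρ^t X ρ^{-t}`. -/
def matsubaraTerm (F : ℂ → H →L[ℂ] H) (n : ℕ) : H →L[ℂ] H :=
  ∫ s in {s : Fin n → ℝ | (∀ i, s i ∈ Set.Icc (0:ℝ) 1) ∧ Monotone s},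
    (List.ofFn fun i => F (((s i - 1/2 : ℝ) : ℂ))).prod


set_option linter.unusedSectionVars false
set_option linter.unreachableTactic false
set_option linter.unusedTactic false
set_option linter.deprecated false

namespace Statement0Aux


variable {H : Type*} [NormedAddCommGroup H] [InnerProductSpace ℂ H] [CompleteSpace H]

/-- Quadratic form of `cfc f T` at `ξ`. -/
def qf (T : H →L[ℂ] H) (f : ℝ → ℝ) (ξ : H) : ℝ := (⟪ξ, cfc f T ξ⟫_ℂ).re

lemma inner_re_le_of_le {A B : H →L[ℂ] H} (h : A ≤ B) (ξ : H) :
    (⟪ξ, A ξ⟫_ℂ).re ≤ (⟪ξ, B ξ⟫_ℂ).re := by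
  have h2 := ((ContinuousLinearMap.le_def A B).mp h).inner_nonneg_right ξ
  simp only [ContinuousLinearMap.sub_apply, inner_sub_right, map_sub, RCLike.re_to_complex] at h2
  have h3 := (Complex.le_def.mp h2).1
  simp only [Complex.zero_re, Complex.sub_re] at h3
  linarith

lemma inner_re_real_smul (x y : H) (r : ℝ) : (⟪x, r • y⟫_ℂ).re = r * (⟪x, y⟫_ℂ).re := by
  rw [show r • y = (r : ℂ) • y from (RCLike.real_smul_eq_coe_smul (K := ℂ) r y), inner_smul_right]
  simp

lemma spec_nonneg {T : H →L[ℂ] H} (hT : 0 ≤ T) {x : ℝ} (hx : x ∈ spectrum ℝ T) : 0 ≤ x :=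
  spectrum_nonneg_of_nonneg hT hx

lemma spec_le_norm [Nontrivial H] {T : H →L[ℂ] H} {x : ℝ} (hx : x ∈ spectrum ℝ T) : x ≤ ‖T‖ :=
  (Real.le_norm_self x).trans (spectrum.norm_le_norm_of_mem hx)

lemma contOn_log_shift {T : H →L[ℂ] H} (hT : 0 ≤ T) {e : ℝ} (he : 0 < e) :
    ContinuousOn (fun x : ℝ => Real.log (x + e)) (spectrum ℝ T) := fun x hx => by
  have h0 : 0 ≤ x := spec_nonneg hT hx
  exact (ContinuousAt.comp (Real.continuousAt_log (by positivity)) (by fun_prop)).continuousWithinAt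

lemma contOn_inv_shift {T : H →L[ℂ] H} (hT : 0 ≤ T) {e : ℝ} (he : 0 < e) :
    ContinuousOn (fun x : ℝ => (x + e)⁻¹) (spectrum ℝ T) := fun x hx => by
  have h0 : 0 ≤ x := spec_nonneg hT hx
  exact (ContinuousAt.inv₀ (by fun_prop) (by positivity)).continuousWithinAt

lemma qf_mono {T : H →L[ℂ] H} {f g : ℝ → ℝ}
    (h : ∀ x ∈ spectrum ℝ T, f x ≤ g x)
    (hf : ContinuousOn f (spectrum ℝ T)) (hg : ContinuousOn g (spectrum ℝ T)) (ξ : H) :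
    qf T f ξ ≤ qf T g ξ :=
  inner_re_le_of_le (cfc_mono h hf hg) ξ

lemma qf_abs_le {T : H →L[ℂ] H} {f : ℝ → ℝ} {c : ℝ} (hc : 0 ≤ c)
    (h : ∀ x ∈ spectrum ℝ T, |f x| ≤ c) (ξ : H) : |qf T f ξ| ≤ c * ‖ξ‖ ^ 2 := by
  have h1 : ‖cfc f T‖ ≤ c := norm_cfc_le hc (by simpa [Real.norm_eq_abs] using h)
  calc |qf T f ξ| ≤ ‖⟪ξ, cfc f T ξ⟫_ℂ‖ := Complex.abs_re_le_norm _
  _ ≤ ‖ξ‖ * ‖cfc f T ξ‖ := norm_inner_le_norm _ _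
  _ ≤ ‖ξ‖ * (‖cfc f T‖ * ‖ξ‖) := by
      gcongr; exact (cfc f T).le_opNorm ξ
  _ ≤ c * ‖ξ‖ ^ 2 := by
      rw [pow_two]; nlinarith [norm_nonneg ξ, (cfc f T).le_opNorm ξ, norm_nonneg (cfc f T ξ)]

lemma qf_sub {T : H →L[ℂ] H} {f g : ℝ → ℝ}
    (hf : ContinuousOn f (spectrum ℝ T)) (hg : ContinuousOn g (spectrum ℝ T)) (ξ : H) :
    qf T (fun x => f x - g x) ξ = qf T f ξ - qf T g ξ := by
  rw [qf, cfc_sub f g T hf hg]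
  simp [qf, ContinuousLinearMap.sub_apply, inner_sub_right]

lemma qf_add {T : H →L[ℂ] H} {f g : ℝ → ℝ}
    (hf : ContinuousOn f (spectrum ℝ T)) (hg : ContinuousOn g (spectrum ℝ T)) (ξ : H) :
    qf T (fun x => f x + g x) ξ = qf T f ξ + qf T g ξ := by
  rw [qf, cfc_add T f g hf hg]
  simp [qf, ContinuousLinearMap.add_apply, inner_add_right]

lemma qf_neg (T : H →L[ℂ] H) (f : ℝ → ℝ) (ξ : H) :
    qf T (fun x => -(f x)) ξ = -qf T f ξ := by
  rw [qf, cfc_neg f T]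
  simp [qf]

lemma qf_const (T : H →L[ℂ] H) (hT : IsSelfAdjoint T) (r : ℝ) (ξ : H) :
    qf T (fun _ => r) ξ = r * ‖ξ‖ ^ 2 := by
  rw [qf, cfc_const r T hT, Algebra.algebraMap_eq_smul_one]
  simp only [ContinuousLinearMap.smul_apply, ContinuousLinearMap.one_apply]
  rw [inner_re_real_smul]
  congr 1
  simpa [RCLike.re_to_complex] using inner_self_eq_norm_sq (𝕜 := ℂ) ξ

lemma qf_const_mul {T : H →L[ℂ] H} (r : ℝ) {f : ℝ → ℝ}
    (hf : ContinuousOn f (spectrum ℝ T)) (ξ : H) :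
    qf T (fun x => r * f x) ξ = r * qf T f ξ := by
  rw [qf, cfc_const_mul r f T hf]
  simp only [ContinuousLinearMap.smul_apply]
  rw [inner_re_real_smul]
  rfl


variable {H : Type*} [NormedAddCommGroup H] [InnerProductSpace ℂ H] [CompleteSpace H]

lemma spec_nonneg' {T : H →L[ℂ] H} (hT : 0 ≤ T) {x : ℝ} (hx : x ∈ spectrum ℝ T) : 0 ≤ x :=
  spectrum_nonneg_of_nonneg hT hx

lemma cfc_shift_mul_inv {T : H →L[ℂ] H} (hT : 0 ≤ T) {e : ℝ} (he : 0 < e) :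
    cfc (fun x : ℝ => x + e) T * cfc (fun x : ℝ => (x + e)⁻¹) T = 1 ∧
    cfc (fun x : ℝ => (x + e)⁻¹) T * cfc (fun x : ℝ => x + e) T = 1 := by
  have hsa : IsSelfAdjoint T := .of_nonneg hT
  have hc1 : ContinuousOn (fun x : ℝ => x + e) (spectrum ℝ T) := by fun_prop
  have hc2 : ContinuousOn (fun x : ℝ => (x + e)⁻¹) (spectrum ℝ T) := fun x hx => by
    have h0 : 0 ≤ x := spec_nonneg' hT hx
    exact (ContinuousAt.inv₀ (by fun_prop) (by positivity)).continuousWithinAt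
  have key : ∀ f g : ℝ → ℝ, ContinuousOn f (spectrum ℝ T) → ContinuousOn g (spectrum ℝ T) →
      (∀ x ∈ spectrum ℝ T, f x * g x = 1) → cfc f T * cfc g T = 1 := by
    intro f g hf hg h1
    rw [← cfc_mul f g T hf hg]
    calc cfc (fun x => f x * g x) T = cfc (fun _ : ℝ => (1:ℝ)) T := cfc_congr h1
    _ = 1 := by rw [cfc_const 1 T hsa, map_one]
  refine ⟨key _ _ hc1 hc2 ?_, key _ _ hc2 hc1 ?_⟩ <;>
    · intro x hx
      have h0 : 0 ≤ x := spec_nonneg' hT hx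
      field_simp

lemma cfc_shift_eq {T : H →L[ℂ] H} (hT : 0 ≤ T) (e : ℝ) :
    cfc (fun x : ℝ => x + e) T = T + algebraMap ℝ (H →L[ℂ] H) e := by
  have hsa : IsSelfAdjoint T := .of_nonneg hT
  have h1 := cfc_add_const e (id : ℝ → ℝ) T continuousOn_id hsa
  simpa [cfc_id ℝ T hsa] using h1

lemma cfc_inv_antitone {A B : H →L[ℂ] H} (hA : 0 ≤ A) (hB : 0 ≤ B) (hAB : A ≤ B)
    {e : ℝ} (he : 0 < e) :
    cfc (fun x : ℝ => (x + e)⁻¹) B ≤ cfc (fun x : ℝ => (x + e)⁻¹) A := by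
  obtain ⟨hA1, hA2⟩ := cfc_shift_mul_inv hA he
  obtain ⟨hB1, hB2⟩ := cfc_shift_mul_inv hB he
  have main := CStarAlgebra.inv_le_inv
    (a := ⟨cfc (fun x : ℝ => x + e) A, cfc (fun x : ℝ => (x + e)⁻¹) A, hA1, hA2⟩)
    (b := ⟨cfc (fun x : ℝ => x + e) B, cfc (fun x : ℝ => (x + e)⁻¹) B, hB1, hB2⟩)
    (cfc_nonneg fun x hx => by have := spec_nonneg' hA hx; positivity)
    (by show cfc _ A ≤ cfc _ B
        rw [cfc_shift_eq hA e, cfc_shift_eq hB e]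
        exact add_le_add hAB le_rfl)
  simpa only [Units.inv_mk] using main

lemma hasDerivAt_of_sq_bound {f : ℝ → ℝ} {x d c δ : ℝ} (hδ : 0 < δ)
    (h : ∀ y, |y - x| ≤ δ → |f y - f x - (y - x) * d| ≤ c * (y - x) ^ 2) :
    HasDerivAt f d x := by
  rw [hasDerivAt_iff_isLittleO, Asymptotics.isLittleO_iff]
  intro ε hε
  have hc : (0:ℝ) < max c 1 := lt_of_lt_of_le one_pos (le_max_right _ _)
  have hδ' : (0:ℝ) < min δ (ε / max c 1) := lt_min hδ (by positivity)
  filter_upwards [Metric.closedBall_mem_nhds x hδ'] with y hy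
  rw [Metric.mem_closedBall, Real.dist_eq] at hy
  have h1 : |y - x| ≤ δ := hy.trans (min_le_left _ _)
  have h2 : |y - x| ≤ ε / max c 1 := hy.trans (min_le_right _ _)
  have h3 := h y h1
  simp only [smul_eq_mul, Real.norm_eq_abs]
  calc |f y - f x - (y - x) * d| ≤ c * (y - x) ^ 2 := h3
  _ ≤ max c 1 * (|y - x| * |y - x|) := by
      have h4 : |y - x| * |y - x| = (y - x) ^ 2 := by rw [← sq_abs]; ring
      rw [h4]; nlinarith [sq_nonneg (y - x), le_max_left c 1]
  _ ≤ max c 1 * (ε / max c 1 * |y - x|) := by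
      gcongr
  _ = ε * |y - x| := by field_simp


lemma exists_exp_le {c : ℝ} (hc : 0 < c) : ∃ m : ℕ, Real.exp (-(m : ℝ)) ≤ c := by
  obtain ⟨m, hm⟩ := exists_nat_gt (-Real.log c)
  refine ⟨m, ?_⟩
  calc Real.exp (-(m : ℝ)) ≤ Real.exp (Real.log c) := Real.exp_le_exp.mpr (by linarith)
  _ = c := Real.exp_log hc

lemma log_taylor_bound {e y h : ℝ} (he : 0 < e) (hy : e ≤ y) (hh : |h| ≤ e / 2) :
    |Real.log (y + h) - Real.log y - h * y⁻¹| ≤ 2 / e ^ 2 * h ^ 2 := by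
  obtain ⟨hh1, hh2⟩ := abs_le.mp hh
  have hy0 : 0 < y := lt_of_lt_of_le he hy
  have hyh : 0 < y + h := by nlinarith
  have hx : |(-h / y)| < 1 := by
    rw [abs_div, abs_neg, abs_of_pos hy0, div_lt_one hy0]
    nlinarith
  have key := Real.abs_log_sub_add_sum_range_le hx 1
  simp only [Finset.sum_range_one, pow_one, Nat.cast_zero, zero_add, div_one] at key
  -- key : |(-h/y) + Real.log (1 - (-h/y))| ≤ |(-h/y)| ^ 2 / (1 - |(-h/y)|)
  have h1m : (1 : ℝ) - -h / y = (y + h) / y := by field_simp; ring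
  rw [h1m, Real.log_div hyh.ne' hy0.ne'] at key
  have habs : |h| / y ≤ 1 / 2 := by
    rw [div_le_div_iff₀ hy0 (by norm_num)]; nlinarith
  have hxx : |(-h / y)| = |h| / y := by rw [abs_div, abs_neg, abs_of_pos hy0]
  rw [hxx] at key
  have hgoal : |Real.log (y + h) - Real.log y - h * y⁻¹| = |(-h / y) + (Real.log (y + h) - Real.log y)| := by
    congr 1; field_simp; ring
  rw [hgoal]
  refine key.trans ?_
  have hd : (1 : ℝ) / 2 ≤ 1 - |h| / y := by linarith
  have hnum : (|h| / y) ^ 2 ≤ h ^ 2 / e ^ 2 := by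
    rw [div_pow, sq_abs]
    gcongr <;> nlinarith
  calc (|h| / y) ^ 2 / (1 - |h| / y) ≤ (h ^ 2 / e ^ 2) / (1 / 2) :=
        div_le_div₀ (by positivity) hnum (by norm_num) hd
  _ = 2 / e ^ 2 * h ^ 2 := by ring

lemma cont_rpow {t : ℝ} (ht : 0 ≤ t) : Continuous fun x : ℝ => x ^ t :=
  continuous_iff_continuousAt.mpr fun x => Real.continuousAt_rpow_const x t (Or.inr ht)

lemma rpow_add_le {M p x δ : ℝ} (hp0 : 0 ≤ p) (hp1 : p ≤ 1) (hx : 0 ≤ x) (hxM : x ≤ M)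
    (hδ0 : 0 < δ) (hδ1 : δ ≤ 1) :
    (x + δ) ^ (1 + p) ≤ x ^ (1 + p) + 2 * (M + 1) ^ p * δ := by
  have hderiv : ∀ y ∈ Set.Ioo x (x + δ), HasDerivAt (fun y => y ^ (1 + p))
      ((1 + p) * y ^ p) y := by
    intro y hy
    have hy0 : 0 < y := lt_of_le_of_lt hx hy.1
    have := Real.hasDerivAt_rpow_const (x := y) (p := 1 + p) (Or.inl hy0.ne')
    simpa [show (1 : ℝ) + p - 1 = p by ring] using this
  obtain ⟨c, hc, hc'⟩ := exists_hasDerivAt_eq_slope (fun y => y ^ (1 + p))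
    (fun y => (1 + p) * y ^ p) (by linarith : x < x + δ)
    ((cont_rpow (by linarith)).continuousOn) hderiv
  · have hcpos : 0 < c := lt_of_le_of_lt hx hc.1
    have hcM : c ≤ M + 1 := by have := hc.2; linarith
    have h1 : c ^ p ≤ (M + 1) ^ p := Real.rpow_le_rpow hcpos.le hcM hp0
    have h2 : (1 + p) * c ^ p ≤ 2 * (M + 1) ^ p := by
      nlinarith [Real.rpow_nonneg hcpos.le p]
    have h3 : (x + δ) ^ (1 + p) - x ^ (1 + p) = (1 + p) * c ^ p * δ := by
      have hδ' : x + δ - x = δ := by ring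
      rw [hc', hδ']; field_simp
    nlinarith [mul_le_mul_of_nonneg_right h2 hδ0.le]

lemma rpow_add_ge {M p x δ : ℝ} (hp0 : 0 ≤ p) (hp1 : p < 1) (hx : 0 ≤ x) (hxM : x ≤ M)
    (hδ0 : 0 < δ) (hδ1 : δ ≤ 1) :
    x ^ (1 - p) + (1 - p) * (M + 1) ^ (-p) * δ ≤ (x + δ) ^ (1 - p) := by
  have hderiv : ∀ y ∈ Set.Ioo x (x + δ), HasDerivAt (fun y => y ^ (1 - p))
      ((1 - p) * y ^ (-p)) y := by
    intro y hy
    have hy0 : 0 < y := lt_of_le_of_lt hx hy.1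
    have := Real.hasDerivAt_rpow_const (x := y) (p := 1 - p) (Or.inl hy0.ne')
    simpa [show (1 : ℝ) - p - 1 = -p by ring] using this
  obtain ⟨c, hc, hc'⟩ := exists_hasDerivAt_eq_slope (fun y => y ^ (1 - p))
    (fun y => (1 - p) * y ^ (-p)) (by linarith : x < x + δ)
    ((cont_rpow (by linarith)).continuousOn) hderiv
  · have hcpos : 0 < c := lt_of_le_of_lt hx hc.1
    have hcM : c ≤ M + 1 := by have := hc.2; linarith
    have hMp : (0:ℝ) < M + 1 := by linarith
    have h1 : (M + 1) ^ (-p) ≤ c ^ (-p) := by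
      rw [Real.rpow_neg hcpos.le, Real.rpow_neg hMp.le]
      have hcp : 0 < c ^ p := Real.rpow_pos_of_pos hcpos p
      exact inv_anti₀ hcp (Real.rpow_le_rpow hcpos.le hcM hp0)
    have h2 : (1 - p) * (M + 1) ^ (-p) ≤ (1 - p) * c ^ (-p) :=
      mul_le_mul_of_nonneg_left h1 (by linarith)
    have h3 : (x + δ) ^ (1 - p) - x ^ (1 - p) = (1 - p) * c ^ (-p) * δ := by
      have hδ' : x + δ - x = δ := by ring
      rw [hc', hδ']; field_simp
    nlinarith [mul_le_mul_of_nonneg_right h2 hδ0.le]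


end Statement0Aux

namespace Statement0Aux
variable {H : Type*} [NormedAddCommGroup H] [InnerProductSpace ℂ H] [CompleteSpace H]

lemma hasDerivAt_logForm {T : H →L[ℂ] H} (hT : 0 ≤ T) {e : ℝ} (he : 0 < e) (ξ : H) :
    HasDerivAt (fun u => qf T (fun x => Real.log (x + u)) ξ)
      (qf T (fun x => (x + e)⁻¹) ξ) e := by
  apply hasDerivAt_of_sq_bound (δ := e / 2) (c := 2 / e ^ 2 * ‖ξ‖ ^ 2) (by positivity)
  intro u hu
  have hu0 : 0 < u := by
    rcases abs_le.mp hu with ⟨h1, -⟩; linarith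
  have hc1 : ContinuousOn (fun x : ℝ => Real.log (x + u)) (spectrum ℝ T) :=
    contOn_log_shift hT hu0
  have hc2 : ContinuousOn (fun x : ℝ => Real.log (x + e)) (spectrum ℝ T) :=
    contOn_log_shift hT he
  have hc3 : ContinuousOn (fun x : ℝ => (x + e)⁻¹) (spectrum ℝ T) :=
    contOn_inv_shift hT he
  have hc4 : ContinuousOn (fun x : ℝ => (u - e) * (x + e)⁻¹) (spectrum ℝ T) :=
    continuousOn_const.mul hc3
  have hrw : qf T (fun x => Real.log (x + u)) ξ - qf T (fun x => Real.log (x + e)) ξ -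
      (u - e) * qf T (fun x => (x + e)⁻¹) ξ =
      qf T (fun x => (Real.log (x + u) - Real.log (x + e)) - (u - e) * (x + e)⁻¹) ξ := by
    rw [qf_sub (f := fun x => Real.log (x + u) - Real.log (x + e)) (hc1.sub hc2) hc4, qf_sub hc1 hc2, qf_const_mul (u - e) hc3]
  rw [hrw]
  have hpt : ∀ x ∈ spectrum ℝ T,
      |Real.log (x + u) - Real.log (x + e) - (u - e) * (x + e)⁻¹| ≤ 2 / e ^ 2 * (u - e) ^ 2 := by
    intro x hx
    have hx0 : 0 ≤ x := spec_nonneg hT hx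
    have hye : e ≤ x + e := by linarith
    have key := log_taylor_bound he hye hu
    have hxe : x + e + (u - e) = x + u := by ring
    rw [hxe] at key
    exact key
  have hb := qf_abs_le (T := T) (c := 2 / e ^ 2 * (u - e) ^ 2) (by positivity) hpt ξ
  calc |qf T (fun x => Real.log (x + u) - Real.log (x + e) - (u - e) * (x + e)⁻¹) ξ|
      ≤ 2 / e ^ 2 * (u - e) ^ 2 * ‖ξ‖ ^ 2 := hb
  _ = 2 / e ^ 2 * ‖ξ‖ ^ 2 * (u - e) ^ 2 := by ring

lemma tail_bound [Nontrivial H] {T : H →L[ℂ] H} (hT : 0 ≤ T) {e : ℝ} (he : 1 ≤ e) (ξ : H) :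
    |qf T (fun x => Real.log (x + e)) ξ - Real.log e * ‖ξ‖ ^ 2| ≤ ‖T‖ / e * ‖ξ‖ ^ 2 := by
  have he0 : 0 < e := lt_of_lt_of_le one_pos he
  have hsa : IsSelfAdjoint T := .of_nonneg hT
  have hc1 : ContinuousOn (fun x : ℝ => Real.log (x + e)) (spectrum ℝ T) :=
    contOn_log_shift hT he0
  have hrw : qf T (fun x => Real.log (x + e)) ξ - Real.log e * ‖ξ‖ ^ 2 =
      qf T (fun x => Real.log (x + e) - Real.log e) ξ := by
    rw [qf_sub hc1 continuousOn_const, qf_const T hsa]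
  rw [hrw]
  apply qf_abs_le (by positivity)
  intro x hx
  have hx0 : 0 ≤ x := spec_nonneg hT hx
  have hxM : x ≤ ‖T‖ := spec_le_norm hx
  have h1 : Real.log e ≤ Real.log (x + e) := Real.log_le_log he0 (by linarith)
  have h2 : Real.log (x + e) - Real.log e ≤ x / e := by
    rw [← Real.log_div (by positivity) he0.ne']
    have := Real.log_le_sub_one_of_pos (show (0:ℝ) < (x + e) / e by positivity)
    have hre : (x + e) / e - 1 = x / e := by field_simp; ring
    linarith
  rw [abs_of_nonneg (by linarith)]
  calc Real.log (x + e) - Real.log e ≤ x / e := h2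
  _ ≤ ‖T‖ / e := by gcongr

lemma logForm_mono [Nontrivial H] {A B : H →L[ℂ] H} (hA : 0 ≤ A) (hB : 0 ≤ B) (hAB : A ≤ B)
    {e : ℝ} (he : 0 < e) (ξ : H) :
    qf A (fun x => Real.log (x + e)) ξ ≤ qf B (fun x => Real.log (x + e)) ξ := by
  set D : ℝ → ℝ := fun u => qf B (fun x => Real.log (x + u)) ξ -
    qf A (fun x => Real.log (x + u)) ξ with hD
  have hderiv : ∀ u : ℝ, 0 < u → HasDerivAt D
      (qf B (fun x => (x + u)⁻¹) ξ - qf A (fun x => (x + u)⁻¹) ξ) u := fun u hu =>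
    (hasDerivAt_logForm hB hu ξ).sub (hasDerivAt_logForm hA hu ξ)
  have hanti : AntitoneOn D (Set.Ici e) := by
    apply antitoneOn_of_deriv_nonpos (convex_Ici e)
    · intro u hu
      exact ((hderiv u (lt_of_lt_of_le he hu)).continuousAt).continuousWithinAt
    · intro u hu
      rw [interior_Ici] at hu
      exact ((hderiv u (he.trans hu)).differentiableAt).differentiableWithinAt
    · intro u hu
      rw [interior_Ici] at hu
      have hu0 : 0 < u := he.trans hu
      rw [(hderiv u hu0).deriv]
      have hmono := inner_re_le_of_le (cfc_inv_antitone hA hB hAB hu0) ξ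
      simpa [qf] using sub_nonpos.mpr hmono
  by_contra hcon
  push_neg at hcon
  obtain ⟨d, hdd, hd0⟩ : ∃ d, d = qf A (fun x => Real.log (x + e)) ξ -
      qf B (fun x => Real.log (x + e)) ξ ∧ 0 < d := ⟨_, rfl, by linarith⟩
  obtain ⟨S, hSdef, hS0⟩ : ∃ S, S = (‖A‖ + ‖B‖) * ‖ξ‖ ^ 2 ∧ 0 ≤ S := ⟨_, rfl, by positivity⟩
  obtain ⟨R, hRdef⟩ : ∃ R, R = max (max e 1) ((2 * S + 2) / d) := ⟨_, rfl⟩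
  have hR1 : 1 ≤ R := hRdef ▸ le_trans (le_max_right e 1) (le_max_left _ _)
  have hRe : e ≤ R := hRdef ▸ le_trans (le_max_left e 1) (le_max_left _ _)
  have hRq : (2 * S + 2) / d ≤ R := hRdef ▸ le_max_right _ _
  have hR0 : 0 < R := lt_of_lt_of_le one_pos hR1
  have hDe : D R ≤ D e := hanti Set.self_mem_Ici hRe hRe
  simp only [hD] at hDe
  have htB := abs_le.mp (tail_bound hB hR1 ξ)
  have htA := abs_le.mp (tail_bound hA hR1 ξ)
  have hDR : -(‖A‖ / R * ‖ξ‖ ^ 2 + ‖B‖ / R * ‖ξ‖ ^ 2) ≤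
      qf B (fun x => Real.log (x + R)) ξ - qf A (fun x => Real.log (x + R)) ξ := by
    linarith [htB.1, htA.2]
  have h5 : d ≤ ‖A‖ / R * ‖ξ‖ ^ 2 + ‖B‖ / R * ‖ξ‖ ^ 2 := by linarith
  have hXS : ‖A‖ / R * ‖ξ‖ ^ 2 + ‖B‖ / R * ‖ξ‖ ^ 2 = S / R := by rw [hSdef]; ring
  have h2S : (0:ℝ) < 2 * S + 2 := by linarith
  have h6 : S / R ≤ S * d / (2 * S + 2) := by
    rw [div_le_div_iff₀ hR0 h2S]
    have hm : (2 * S + 2) / d * d = 2 * S + 2 := by field_simp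
    nlinarith [mul_le_mul_of_nonneg_right hRq hd0.le]
  have h7 : S * d / (2 * S + 2) < d := by
    rw [div_lt_iff₀ h2S]
    nlinarith
  rw [hXS] at h5
  linarith

end Statement0Aux


open Statement0Aux in
lemma upper_step {H : Type*} [NormedAddCommGroup H] [InnerProductSpace ℂ H] [CompleteSpace H]
    [Nontrivial H] {ρ σ : H →L[ℂ] H} (hρ0 : 0 ≤ ρ) (hσ0 : 0 ≤ σ)
    {p C : ℝ} (hp0 : 0 ≤ p) (hp1 : p < 1) (hC : 1 < C)
    (hlow : C⁻¹ • opow ρ (1 + p) ≤ σ) (ξ : H) (n : ℕ) :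
    ∃ m : ℕ, negLogFormSeq σ ξ n ≤ Real.log C * ‖ξ‖ ^ 2 + (1 + p) * negLogFormSeq ρ ξ m := by
  have hC0 : (0:ℝ) < C := lt_trans one_pos hC
  have hsaρ : IsSelfAdjoint ρ := .of_nonneg hρ0
  set M : ℝ := ‖ρ‖ with hM
  have hM0 : 0 ≤ M := norm_nonneg ρ
  set ε : ℝ := Real.exp (-(n:ℝ)) with hεdef
  have hε : 0 < ε := Real.exp_pos _
  have hK : (0:ℝ) < 2 * (M + 1) ^ p := by positivity
  obtain ⟨m, hm⟩ := exists_exp_le (show (0:ℝ) < min 1 (C * ε / (2 * (M + 1) ^ p)) from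
    lt_min one_pos (by positivity))
  set δ : ℝ := Real.exp (-(m:ℝ)) with hδdef
  have hδ0 : 0 < δ := Real.exp_pos _
  have hδ1 : δ ≤ 1 := hm.trans (min_le_left _ _)
  have hδC : δ ≤ C * ε / (2 * (M + 1) ^ p) := hm.trans (min_le_right _ _)
  have hgcont : Continuous (fun x : ℝ => C⁻¹ * x ^ (1 + p)) :=
    continuous_const.mul (cont_rpow (by linarith))
  have hgA : cfc (fun x : ℝ => C⁻¹ * x ^ (1 + p)) ρ = C⁻¹ • opow ρ (1 + p) := by
    rw [opow]
    exact cfc_const_mul C⁻¹ (fun x : ℝ => x ^ (1 + p)) ρ ((cont_rpow (by linarith)).continuousOn)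
  have hA0 : 0 ≤ cfc (fun x : ℝ => C⁻¹ * x ^ (1 + p)) ρ := cfc_nonneg fun x hx => by
    have := spec_nonneg hρ0 hx; positivity
  have hAσ : cfc (fun x : ℝ => C⁻¹ * x ^ (1 + p)) ρ ≤ σ := by rw [hgA]; exact hlow
  have hL := logForm_mono hA0 hσ0 hAσ hε ξ
  have hgimg : ContinuousOn (fun x : ℝ => Real.log (x + ε))
      ((fun x : ℝ => C⁻¹ * x ^ (1 + p)) '' spectrum ℝ ρ) := by
    rintro y ⟨x, hx, rfl⟩
    have hx0 : 0 ≤ x := spec_nonneg hρ0 hx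
    have hy0 : 0 ≤ C⁻¹ * x ^ (1 + p) := by positivity
    exact (ContinuousAt.comp (Real.continuousAt_log (by positivity))
      (by fun_prop)).continuousWithinAt
  have hcomp : qf (cfc (fun x : ℝ => C⁻¹ * x ^ (1 + p)) ρ) (fun x => Real.log (x + ε)) ξ
      = qf ρ (fun x => Real.log (C⁻¹ * x ^ (1 + p) + ε)) ξ := by
    have h := cfc_comp' (fun x : ℝ => Real.log (x + ε)) (fun x : ℝ => C⁻¹ * x ^ (1 + p)) ρ
      hgimg hgcont.continuousOn hsaρ
    rw [qf, qf, ← h]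
  have hpt : ∀ x ∈ spectrum ℝ ρ,
      -(Real.log (C⁻¹ * x ^ (1 + p) + ε)) ≤ Real.log C + (1 + p) * negLogTrunc m x := by
    intro x hx
    have hx0 : 0 ≤ x := spec_nonneg hρ0 hx
    have hxM : x ≤ M := spec_le_norm hx
    have h1 : (x + δ) ^ (1 + p) ≤ x ^ (1 + p) + 2 * (M + 1) ^ p * δ :=
      rpow_add_le hp0 hp1.le hx0 hxM hδ0 hδ1
    have h2 : 2 * (M + 1) ^ p * δ ≤ C * ε := by
      have := (le_div_iff₀ hK).mp hδC
      linarith [mul_comm δ (2 * (M + 1) ^ p)]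
    have key : C⁻¹ * (x + δ) ^ (1 + p) ≤ C⁻¹ * x ^ (1 + p) + ε := by
      have h12 : (x + δ) ^ (1 + p) ≤ x ^ (1 + p) + C * ε := by linarith
      have h13 := mul_le_mul_of_nonneg_left h12 (inv_nonneg.mpr hC0.le)
      have h14 : C⁻¹ * C = 1 := inv_mul_cancel₀ hC0.ne'
      nlinarith
    have hpos1 : (0:ℝ) < C⁻¹ * (x + δ) ^ (1 + p) := by positivity
    have hlog := Real.log_le_log hpos1 key
    have hexpand : Real.log (C⁻¹ * (x + δ) ^ (1 + p)) =
        -Real.log C + (1 + p) * Real.log (x + δ) := by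
      rw [Real.log_mul (by positivity) (by positivity), Real.log_inv,
        Real.log_rpow (by positivity)]
    have hnlt : negLogTrunc m x = -(Real.log (x + δ)) := rfl
    rw [hnlt]
    linarith
  have hcρ1 : ContinuousOn (fun x : ℝ => -(Real.log (C⁻¹ * x ^ (1 + p) + ε)))
      (spectrum ℝ ρ) := by
    intro x hx
    have hx0 : 0 ≤ x := spec_nonneg hρ0 hx
    have hy0 : 0 ≤ C⁻¹ * x ^ (1 + p) := by positivity
    exact ((ContinuousAt.comp (Real.continuousAt_log (by
        have hne : 0 < C⁻¹ * x ^ (1 + p) + ε := by positivity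
        exact hne.ne'))
      ((hgcont.continuousAt).add continuousAt_const)).neg).continuousWithinAt
  have hcm1 : ContinuousOn (negLogTrunc m) (spectrum ℝ ρ) := by
    have : negLogTrunc m = fun x : ℝ => -(Real.log (x + δ)) := rfl
    rw [this]
    exact (contOn_log_shift hρ0 hδ0).neg
  have hcm2 : ContinuousOn (fun x : ℝ => Real.log C + (1 + p) * negLogTrunc m x)
      (spectrum ℝ ρ) := continuousOn_const.add (continuousOn_const.mul hcm1)
  have step1 : negLogFormSeq σ ξ n = -(qf σ (fun x => Real.log (x + ε)) ξ) := by
    have h1 : negLogTrunc n = fun x : ℝ => -(Real.log (x + ε)) := rfl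
    have h2 : negLogFormSeq σ ξ n = qf σ (negLogTrunc n) ξ := rfl
    rw [h2, h1, qf_neg]
  have step2 : qf ρ (fun x => -(Real.log (C⁻¹ * x ^ (1 + p) + ε))) ξ ≤
      qf ρ (fun x => Real.log C + (1 + p) * negLogTrunc m x) ξ :=
    qf_mono hpt hcρ1 hcm2 ξ
  have step3 : qf ρ (fun x => Real.log C + (1 + p) * negLogTrunc m x) ξ =
      Real.log C * ‖ξ‖ ^ 2 + (1 + p) * negLogFormSeq ρ ξ m := by
    rw [qf_add (g := fun x => (1 + p) * negLogTrunc m x) continuousOn_const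
        (continuousOn_const.mul hcm1), qf_const ρ hsaρ,
      qf_const_mul (1 + p) hcm1]
    rfl
  refine ⟨m, ?_⟩
  have hneg : qf ρ (fun x => -(Real.log (C⁻¹ * x ^ (1 + p) + ε))) ξ =
      -(qf ρ (fun x => Real.log (C⁻¹ * x ^ (1 + p) + ε)) ξ) := qf_neg ρ _ ξ
  rw [step1, ← step3]
  rw [hcomp] at hL
  linarith [step2, hneg, hL]

open Statement0Aux in
lemma lower_step {H : Type*} [NormedAddCommGroup H] [InnerProductSpace ℂ H] [CompleteSpace H]
    [Nontrivial H] {ρ σ : H →L[ℂ] H} (hρ0 : 0 ≤ ρ) (hσ0 : 0 ≤ σ)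
    {p C : ℝ} (hp0 : 0 ≤ p) (hp1 : p < 1) (hC : 1 < C)
    (hupp : σ ≤ C • opow ρ (1 - p)) (ξ : H) (m : ℕ) :
    ∃ n : ℕ, -Real.log C * ‖ξ‖ ^ 2 + (1 - p) * negLogFormSeq ρ ξ m ≤ negLogFormSeq σ ξ n := by
  have hC0 : (0:ℝ) < C := lt_trans one_pos hC
  have hsaρ : IsSelfAdjoint ρ := .of_nonneg hρ0
  set M : ℝ := ‖ρ‖ with hM
  have hM0 : 0 ≤ M := norm_nonneg ρ
  set δ : ℝ := Real.exp (-(m:ℝ)) with hδdef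
  have hδ0 : 0 < δ := Real.exp_pos _
  have hδ1 : δ ≤ 1 := by
    rw [hδdef]
    calc Real.exp (-(m:ℝ)) ≤ Real.exp 0 := Real.exp_le_exp.mpr (neg_nonpos.mpr (Nat.cast_nonneg m))
    _ = 1 := Real.exp_zero
  have hc0 : (0:ℝ) < (1 - p) * (M + 1) ^ (-p) := by
    have : (0:ℝ) < (M + 1) ^ (-p) := Real.rpow_pos_of_pos (by linarith) _
    nlinarith
  obtain ⟨n, hn⟩ := exists_exp_le (show (0:ℝ) < C * ((1 - p) * (M + 1) ^ (-p)) * δ by positivity)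
  set ε : ℝ := Real.exp (-(n:ℝ)) with hεdef
  have hε : 0 < ε := Real.exp_pos _
  have hgcont : Continuous (fun x : ℝ => C * x ^ (1 - p)) :=
    continuous_const.mul (cont_rpow (by linarith))
  have hgB : cfc (fun x : ℝ => C * x ^ (1 - p)) ρ = C • opow ρ (1 - p) := by
    rw [opow]
    exact cfc_const_mul C (fun x : ℝ => x ^ (1 - p)) ρ ((cont_rpow (by linarith)).continuousOn)
  have hB0 : 0 ≤ cfc (fun x : ℝ => C * x ^ (1 - p)) ρ := cfc_nonneg fun x hx => by
    have := spec_nonneg hρ0 hx; positivity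
  have hσB : σ ≤ cfc (fun x : ℝ => C * x ^ (1 - p)) ρ := by rw [hgB]; exact hupp
  have hL := logForm_mono hσ0 hB0 hσB hε ξ
  have hgimg : ContinuousOn (fun x : ℝ => Real.log (x + ε))
      ((fun x : ℝ => C * x ^ (1 - p)) '' spectrum ℝ ρ) := by
    rintro y ⟨x, hx, rfl⟩
    have hx0 : 0 ≤ x := spec_nonneg hρ0 hx
    have hy0 : 0 ≤ C * x ^ (1 - p) := by positivity
    exact (ContinuousAt.comp (Real.continuousAt_log (by positivity))
      (by fun_prop)).continuousWithinAt
  have hcomp : qf (cfc (fun x : ℝ => C * x ^ (1 - p)) ρ) (fun x => Real.log (x + ε)) ξ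
      = qf ρ (fun x => Real.log (C * x ^ (1 - p) + ε)) ξ := by
    have h := cfc_comp' (fun x : ℝ => Real.log (x + ε)) (fun x : ℝ => C * x ^ (1 - p)) ρ
      hgimg hgcont.continuousOn hsaρ
    rw [qf, qf, ← h]
  have hpt : ∀ x ∈ spectrum ℝ ρ,
      -Real.log C + (1 - p) * negLogTrunc m x ≤ -(Real.log (C * x ^ (1 - p) + ε)) := by
    intro x hx
    have hx0 : 0 ≤ x := spec_nonneg hρ0 hx
    have hxM : x ≤ M := spec_le_norm hx
    have h1 : x ^ (1 - p) + (1 - p) * (M + 1) ^ (-p) * δ ≤ (x + δ) ^ (1 - p) :=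
      rpow_add_ge hp0 hp1 hx0 hxM hδ0 hδ1
    have key : C * x ^ (1 - p) + ε ≤ C * (x + δ) ^ (1 - p) := by
      have h13 := mul_le_mul_of_nonneg_left h1 hC0.le
      nlinarith
    have hpos1 : (0:ℝ) < C * x ^ (1 - p) + ε := by positivity
    have hlog := Real.log_le_log hpos1 key
    have hexpand : Real.log (C * (x + δ) ^ (1 - p)) =
        Real.log C + (1 - p) * Real.log (x + δ) := by
      rw [Real.log_mul (by positivity) (by positivity), Real.log_rpow (by positivity)]
    have hnlt : negLogTrunc m x = -(Real.log (x + δ)) := rfl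
    rw [hnlt]
    linarith
  have hcρ1 : ContinuousOn (fun x : ℝ => -(Real.log (C * x ^ (1 - p) + ε)))
      (spectrum ℝ ρ) := by
    intro x hx
    have hx0 : 0 ≤ x := spec_nonneg hρ0 hx
    have hy0 : 0 ≤ C * x ^ (1 - p) := by positivity
    exact ((ContinuousAt.comp (Real.continuousAt_log (by
        have hne : 0 < C * x ^ (1 - p) + ε := by positivity
        exact hne.ne'))
      ((hgcont.continuousAt).add continuousAt_const)).neg).continuousWithinAt
  have hcm1 : ContinuousOn (negLogTrunc m) (spectrum ℝ ρ) := by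
    have : negLogTrunc m = fun x : ℝ => -(Real.log (x + δ)) := rfl
    rw [this]
    exact (contOn_log_shift hρ0 hδ0).neg
  have hcm2 : ContinuousOn (fun x : ℝ => -Real.log C + (1 - p) * negLogTrunc m x)
      (spectrum ℝ ρ) := continuousOn_const.add (continuousOn_const.mul hcm1)
  have step1 : negLogFormSeq σ ξ n = -(qf σ (fun x => Real.log (x + ε)) ξ) := by
    have h1 : negLogTrunc n = fun x : ℝ => -(Real.log (x + ε)) := rfl
    have h2 : negLogFormSeq σ ξ n = qf σ (negLogTrunc n) ξ := rfl
    rw [h2, h1, qf_neg]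
  have step2 : qf ρ (fun x => -Real.log C + (1 - p) * negLogTrunc m x) ξ ≤
      qf ρ (fun x => -(Real.log (C * x ^ (1 - p) + ε))) ξ :=
    qf_mono hpt hcm2 hcρ1 ξ
  have step3 : qf ρ (fun x => -Real.log C + (1 - p) * negLogTrunc m x) ξ =
      -Real.log C * ‖ξ‖ ^ 2 + (1 - p) * negLogFormSeq ρ ξ m := by
    rw [qf_add (g := fun x => (1 - p) * negLogTrunc m x) continuousOn_const
        (continuousOn_const.mul hcm1), qf_const ρ hsaρ,
      qf_const_mul (1 - p) hcm1]
    rfl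
  refine ⟨n, ?_⟩
  have hneg : qf ρ (fun x => -(Real.log (C * x ^ (1 - p) + ε))) ξ =
      -(qf ρ (fun x => Real.log (C * x ^ (1 - p) + ε)) ξ) := qf_neg ρ _ ξ
  rw [step1, ← step3]
  rw [hcomp] at hL
  linarith [step2, hneg, hL]


/-- If `ρ = exp (-H₀)` and `σ = ρ_X = exp (-(H₀+X))` are finite faithful
weights, and `σ` is `p`-nearby `ρ` with constant `C > 1`
(`C⁻¹ ρ^{1+p} ≤ σ ≤ C ρ^{1-p}`), then the form domain of the quadratic form `X`
(with form domain `Dq`, the form sum relation `-log σ = H₀ + X` being expressed by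
`hdom` and `hsum`) contains `Q(H₀)`, and on `Q(H₀)` one has the form inequalities
`-log C - p H₀ ≤ -X ≤ log C + p H₀`; in particular `X` is an `H₀`-bounded form with
relative form bound at most `p`. -/
theorem statement0 {ι : Type*} (b : HilbertBasis ι ℂ H) (ρ σ : H →L[ℂ] H)
    (hρ : IsFiniteWeight b ρ) (hσ : IsFiniteWeight b σ)
    (p : ℝ) (hp0 : 0 ≤ p) (hp1 : p < 1) (C : ℝ) (hC : 1 < C)
    (hlow : C⁻¹ • opow ρ (1 + p) ≤ σ) (hupp : σ ≤ C • opow ρ (1 - p))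
    (q : H → ℝ) (Dq : Set H)
    (hdom : ∀ ξ : H, InFormDomain σ ξ ↔ (InFormDomain ρ ξ ∧ ξ ∈ Dq))
    (hsum : ∀ ξ : H, InFormDomain σ ξ → negLogForm σ ξ = negLogForm ρ ξ + q ξ) :
    (∀ ξ : H, InFormDomain ρ ξ → ξ ∈ Dq) ∧
    (∀ ξ : H, InFormDomain ρ ξ →
      - Real.log C * ‖ξ‖ ^ 2 - p * negLogForm ρ ξ ≤ -(q ξ) ∧
      -(q ξ) ≤ Real.log C * ‖ξ‖ ^ 2 + p * negLogForm ρ ξ) ∧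
    (∀ ξ : H, InFormDomain ρ ξ →
      |q ξ| ≤ Real.log C * ‖ξ‖ ^ 2 + p * negLogForm ρ ξ) := by
  rcases subsingleton_or_nontrivial H with hsub | hnt
  · have hz : ∀ ξ : H, ξ = 0 := fun ξ => Subsingleton.elim ξ 0
    have hseq : ∀ (T : H →L[ℂ] H) (ξ : H) (k : ℕ), negLogFormSeq T ξ k = 0 := by
      intro T ξ k
      rw [negLogFormSeq, hz ξ]
      simp
    have hform : ∀ (T : H →L[ℂ] H) (ξ : H), negLogForm T ξ = 0 := by
      intro T ξ
      rw [negLogForm]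
      simp [hseq]
    have hdomσ : ∀ ξ : H, InFormDomain σ ξ := by
      intro ξ
      exact ⟨0, by rintro y ⟨k, rfl⟩; exact le_of_eq (hseq σ ξ k)⟩
    have hqz : ∀ ξ : H, q ξ = 0 := by
      intro ξ
      have := hsum ξ (hdomσ ξ)
      rw [hform, hform] at this
      linarith
    have hlogC : 0 ≤ Real.log C := Real.log_nonneg hC.le
    refine ⟨fun ξ _ => ((hdom ξ).mp (hdomσ ξ)).2, fun ξ _ => ?_, fun ξ _ => ?_⟩
    · rw [hqz ξ, hform, hz ξ]
      norm_num
    · rw [hqz ξ, hform, hz ξ]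
      norm_num
  · have hρ0 : 0 ≤ ρ := hρ.1
    have hσ0 : 0 ≤ σ := hσ.1
    have main : ∀ ξ : H, InFormDomain ρ ξ → ξ ∈ Dq ∧
        (- Real.log C * ‖ξ‖ ^ 2 - p * negLogForm ρ ξ ≤ -(q ξ) ∧
          -(q ξ) ≤ Real.log C * ‖ξ‖ ^ 2 + p * negLogForm ρ ξ) := by
      intro ξ hξ
      have hbd : ∀ n, negLogFormSeq σ ξ n ≤ Real.log C * ‖ξ‖ ^ 2 + (1 + p) * negLogForm ρ ξ := by
        intro n
        obtain ⟨m, hm⟩ := upper_step hρ0 hσ0 hp0 hp1 hC hlow ξ n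
        have h1 : negLogFormSeq ρ ξ m ≤ negLogForm ρ ξ := le_ciSup hξ m
        have h2 := mul_le_mul_of_nonneg_left h1 (by linarith : (0:ℝ) ≤ 1 + p)
        linarith
      have hBσ : InFormDomain σ ξ :=
        ⟨Real.log C * ‖ξ‖ ^ 2 + (1 + p) * negLogForm ρ ξ, by rintro y ⟨nn, rfl⟩; exact hbd nn⟩
      have hDq : ξ ∈ Dq := ((hdom ξ).mp hBσ).2
      have hsums := hsum ξ hBσ
      have hub : negLogForm σ ξ ≤ Real.log C * ‖ξ‖ ^ 2 + (1 + p) * negLogForm ρ ξ :=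
        ciSup_le hbd
      have hlb : -Real.log C * ‖ξ‖ ^ 2 + (1 - p) * negLogForm ρ ξ ≤ negLogForm σ ξ := by
        have hstep : ∀ m : ℕ, (1 - p) * negLogFormSeq ρ ξ m ≤
            negLogForm σ ξ + Real.log C * ‖ξ‖ ^ 2 := by
          intro m
          obtain ⟨n, hn⟩ := lower_step hρ0 hσ0 hp0 hp1 hC hupp ξ m
          have h2 : negLogFormSeq σ ξ n ≤ negLogForm σ ξ := le_ciSup hBσ n
          linarith
        have h1p : (0:ℝ) < 1 - p := by linarith
        have hsup : negLogForm ρ ξ ≤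
            (negLogForm σ ξ + Real.log C * ‖ξ‖ ^ 2) / (1 - p) := by
          apply ciSup_le
          intro m
          rw [le_div_iff₀ h1p]
          linarith [hstep m, mul_comm (negLogFormSeq ρ ξ m) (1 - p)]
        have h3 := mul_le_mul_of_nonneg_left hsup h1p.le
        rw [mul_comm (1 - p) ((negLogForm σ ξ + Real.log C * ‖ξ‖ ^ 2) / (1 - p)),
          div_mul_cancel₀ _ h1p.ne'] at h3
        linarith
      exact ⟨hDq, by constructor <;> linarith⟩
    refine ⟨fun ξ hξ => (main ξ hξ).1, fun ξ hξ => (main ξ hξ).2, fun ξ hξ => ?_⟩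
    obtain ⟨h1, h2⟩ := (main ξ hξ).2
    rw [abs_le]
    constructor <;> linarith
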